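/- For every 0 < α < 1, the 3×3 Jacobian matrix of partial derivatives of F evaluated at the equilibrium point K₂₋ = ((2 + α - √(α² + 20α + 4))/(2α), 0, (2-α)/α) has eigenvalues -2/α, -√(α² + 20α + 4)/α, and (7α - 2 - √(α² + 20α + 4))/(2α), and all three eigenvalues are strictly negative; hence K₂₋ is a hyperbolic sink (stable node). -/

import Mathlib

open Polynomial

/-- The vacuum form-independent dynamical system with parameter `α`, as a map on
`Fin 3 → ℝ` in coordinates `(u₁, u₄, q)`. -/
noncomputable def vacuumFormIndepField (α : ℝ) (p : Fin 3 → ℝ) : Fin 3 → ℝ :=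
  ![p 0 * (p 0 - 2 - p 2) - 2 * p 2 + 6 * (p 1)^2 - 2,
    p 1 * (2 - p 2 + p 0),
    -2 * (p 2 - (1-α)/α) * (p 2 - (2-α)/α)]

/-- The 3×3 Jacobian matrix of partial derivatives of the vacuum
form-independent dynamical system at a point `p`. -/
noncomputable def vacuumFormIndepJacobian (α : ℝ) (p : Fin 3 → ℝ) :
    Matrix (Fin 3) (Fin 3) ℝ :=
  Matrix.of fun i j =>
    deriv (fun s : ℝ => vacuumFormIndepField α (Function.update p j s) i) (p j)

lemma deriv_quad (f : ℝ → ℝ) (a b c x : ℝ) (h : ∀ s, f s = a*s^2 + b*s + c) :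
    deriv f x = 2*a*x + b := by
  have hf : f = fun s => a*s^2 + b*s + c := funext h
  have H : HasDerivAt (fun s : ℝ => a*s^2 + b*s + c) (2*a*x + b) x := by
    have h1 := ((hasDerivAt_pow 2 x).const_mul a).add
      (((hasDerivAt_id x).const_mul b).add_const c)
    convert h1 using 1
    · rfl
    · rfl
    · funext s; simp; ring
    · push_cast; ring
  rw [hf, H.deriv]

lemma jac_eq (α : ℝ) (p : Fin 3 → ℝ) :
    vacuumFormIndepJacobian α p =
      !![2 * p 0 - 2 - p 2, 12 * p 1, -(p 0) - 2;
         p 1, 2 - p 2 + p 0, -(p 1);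
         0, 0, -2*(2 * p 2 - (1-α)/α - (2-α)/α)] := by
  ext i j
  fin_cases i <;> fin_cases j
  · rw [vacuumFormIndepJacobian, Matrix.of_apply,
      deriv_quad _ 1 (-(2 + p 2)) (-2*p 2 + 6*(p 1)^2 - 2) _
        (fun s => by simp [vacuumFormIndepField, Function.update]; ring)]
    norm_num [Matrix.cons_val_zero, Matrix.cons_val_one, Matrix.head_cons, Fin.reduceFinMk] <;> ring
  · rw [vacuumFormIndepJacobian, Matrix.of_apply,
      deriv_quad _ 6 0 (p 0 * (p 0 - 2 - p 2) - 2*p 2 - 2) _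
        (fun s => by simp [vacuumFormIndepField, Function.update]; ring)]
    norm_num [Matrix.cons_val_zero, Matrix.cons_val_one, Matrix.head_cons, Fin.reduceFinMk] <;> ring
  · rw [vacuumFormIndepJacobian, Matrix.of_apply,
      deriv_quad _ 0 (-(p 0) - 2) (p 0 * (p 0 - 2) + 6*(p 1)^2 - 2) _
        (fun s => by simp [vacuumFormIndepField, Function.update]; ring)]
    norm_num [Matrix.cons_val_zero, Matrix.cons_val_one, Matrix.head_cons, Fin.reduceFinMk] <;> ring
  · rw [vacuumFormIndepJacobian, Matrix.of_apply,
      deriv_quad _ 0 (p 1) (p 1 * (2 - p 2)) _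
        (fun s => by simp [vacuumFormIndepField, Function.update]; ring)]
    norm_num [Matrix.cons_val_zero, Matrix.cons_val_one, Matrix.head_cons, Fin.reduceFinMk] <;> ring
  · rw [vacuumFormIndepJacobian, Matrix.of_apply,
      deriv_quad _ 0 (2 - p 2 + p 0) 0 _
        (fun s => by simp [vacuumFormIndepField, Function.update]; ring)]
    norm_num [Matrix.cons_val_zero, Matrix.cons_val_one, Matrix.head_cons, Fin.reduceFinMk] <;> ring
  · rw [vacuumFormIndepJacobian, Matrix.of_apply,
      deriv_quad _ 0 (-(p 1)) (p 1 * (2 + p 0)) _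
        (fun s => by simp [vacuumFormIndepField, Function.update]; ring)]
    norm_num [Matrix.cons_val_zero, Matrix.cons_val_one, Matrix.head_cons, Fin.reduceFinMk] <;> ring
  · rw [vacuumFormIndepJacobian, Matrix.of_apply,
      deriv_quad _ 0 0 (-2*(p 2 - (1-α)/α)*(p 2 - (2-α)/α)) _
        (fun s => by simp [vacuumFormIndepField, Function.update])]
    norm_num [Matrix.cons_val_zero, Matrix.cons_val_one, Matrix.head_cons, Fin.reduceFinMk]
  · rw [vacuumFormIndepJacobian, Matrix.of_apply,
      deriv_quad _ 0 0 (-2*(p 2 - (1-α)/α)*(p 2 - (2-α)/α)) _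
        (fun s => by simp [vacuumFormIndepField, Function.update])]
    norm_num [Matrix.cons_val_zero, Matrix.cons_val_one, Matrix.head_cons, Fin.reduceFinMk]
  · rw [vacuumFormIndepJacobian, Matrix.of_apply,
      deriv_quad _ (-2) (2*((1-α)/α + (2-α)/α)) (-2*((1-α)/α)*((2-α)/α)) _
        (fun s => by simp [vacuumFormIndepField, Function.update]; ring)]
    simp only [show (Fin.mk 2 (by omega) : Fin 3) = 2 from rfl]
    norm_num [Matrix.cons_val_zero, Matrix.cons_val_one, Matrix.cons_val_two, Matrix.head_cons, Fin.reduceFinMk] <;> ring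

/-- For every `0 < α < 1`, the Jacobian at the equilibrium point
`K₂₋ = ((2 + α - √(α² + 20α + 4))/(2α), 0, (2-α)/α)` has eigenvalues
`-2/α`, `-√(α² + 20α + 4)/α` and `(7α - 2 - √(α² + 20α + 4))/(2α)`, all strictly
negative; hence `K₂₋` is a hyperbolic sink (stable node). -/
theorem K2_minus_jacobian_sink (α : ℝ) (hα : 0 < α) (hα' : α < 1) :
    ((vacuumFormIndepJacobian α
        ![(2 + α - Real.sqrt (α^2 + 20*α + 4))/(2*α), 0, (2-α)/α]).charpoly =
      (X - C (-2/α)) * (X - C (-Real.sqrt (α^2 + 20*α + 4)/α)) *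
        (X - C ((7*α - 2 - Real.sqrt (α^2 + 20*α + 4))/(2*α)))) ∧
    -2/α < 0 ∧ -Real.sqrt (α^2 + 20*α + 4)/α < 0 ∧
    (7*α - 2 - Real.sqrt (α^2 + 20*α + 4))/(2*α) < 0 := by
  have hα0 : α ≠ 0 := ne_of_gt hα
  set s := Real.sqrt (α^2 + 20*α + 4) with hs
  have hspos : 0 < s := Real.sqrt_pos.mpr (by nlinarith)
  refine ⟨?_, ?_, ?_, ?_⟩
  · have hM : vacuumFormIndepJacobian α ![(2 + α - s)/(2*α), 0, (2-α)/α] =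
        !![-s/α, 0, -((2 + α - s)/(2*α)) - 2;
           0, (7*α - 2 - s)/(2*α), 0;
           0, 0, -2/α] := by
      rw [jac_eq]
      ext i j
      fin_cases i <;> fin_cases j <;>
        norm_num [Matrix.cons_val_zero, Matrix.cons_val_one, Matrix.cons_val_two, Matrix.head_cons] <;>
        (try field_simp) <;> first | ring1 | (left; ring1) | trivial
    rw [hM, Matrix.charpoly, Matrix.det_fin_three]
    simp [Matrix.charmatrix_apply_eq, Matrix.charmatrix_apply_ne,
      Matrix.cons_val_zero, Matrix.cons_val_one, Matrix.head_cons,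
      Matrix.vecHead, Matrix.vecTail]
    ring
  · exact div_neg_of_neg_of_pos (by norm_num) hα
  · exact div_neg_of_neg_of_pos (by linarith) hα
  · apply div_neg_of_neg_of_pos _ (by linarith)
    rcases le_or_gt (7*α - 2) 0 with h | h
    · linarith
    · have h2 : 7*α - 2 < s := by
        rw [hs]
        rw [show (7*α-2 : ℝ) = Real.sqrt ((7*α-2)^2) from (Real.sqrt_sq h.le).symm]
        apply Real.sqrt_lt_sqrt (by positivity)
        nlinarith
      linarith
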